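/- The rooted tree T_{a,b} (defined for all a ≤ b < 2a−1 directly, and for b ≥ 2a−1 recursively by attaching a rooted leaf to every unrooted vertex of T_{a,b−a}) is balanced: for every subset S of its a unrooted vertices, the number of edges incident to S is at least (b/a)·|S|. -/

import Mathlib

/-- `eCount G S` is the number of edges of `G` with at least one endpoint in `S`. -/
noncomputable def eCount {V : Type} (G : SimpleGraph V) (S : Set V) : ℕ :=
  {e ∈ G.edgeSet | ∃ v ∈ S, v ∈ e}.ncard

/-- The (1-indexed) base-path vertex to which the `j`-th extra rooted leaf of the base
case `T_{a,a+i}` is attached: the list `1, ⌊1+a/i⌋, …, ⌊1+(i-1)a/i⌋, a`. -/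
def attachPos (a i j : ℕ) : ℕ :=
  if j = 0 then 1 else if j = i then a else 1 + j * a / i

/-- The number of recursive layers used to build `T_{a,b}`: we peel off `a` edges at a
time until the number of edges lies in `[a-1, 2a-1)`. -/
def layers (a b : ℕ) : ℕ := (b + 1 - a) / a

/-- The number of edges of the base-case tree from which `T_{a,b}` is built. -/
def baseEdges (a b : ℕ) : ℕ := b - layers a b * a

/-- Vertices of `T_{a,b}`: the `a` unrooted base-path vertices, the rooted leaves of the
base case, and one rooted leaf per base vertex in each recursive layer. -/
def TabV (a b : ℕ) : Type :=
  Fin a ⊕ (Fin (baseEdges a b + 1 - a) ⊕ (Fin (layers a b) × Fin a))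

/-- The rooted tree `T_{a,b}`, defined for `a ≤ b < 2a-1` directly (path `1, …, a` with
`b-a+1` rooted leaves attached at the prescribed positions) and for `b ≥ 2a-1`
recursively by attaching a rooted leaf to every unrooted vertex of `T_{a,b-a}`;
the recursion is unrolled into `layers a b` layers of leaves. -/
def TabFull (a b : ℕ) : SimpleGraph (TabV a b) :=
  SimpleGraph.fromRel (fun x y =>
    match x, y with
    | Sum.inl u, Sum.inl v => (u : ℕ) + 1 = (v : ℕ)
    | Sum.inl u, Sum.inr (Sum.inl j) =>
        (u : ℕ) + 1 = attachPos a (baseEdges a b - a) (j : ℕ)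
    | Sum.inl u, Sum.inr (Sum.inr q) => u = q.2
    | _, _ => False)

/-! ### Auxiliary counting machinery -/

open Finset

def pcount (a : ℕ) (S : Finset ℕ) : ℕ :=
  ((Finset.range (a-1)).filter (fun u => u ∈ S ∨ u+1 ∈ S)).card

def lcount (a e : ℕ) (S : Finset ℕ) : ℕ :=
  ((Finset.range (e+1-a)).filter (fun j => attachPos a (e-a) j - 1 ∈ S)).card

lemma attachPos_of_lt (a i j : ℕ) (hj : j < i) : attachPos a i j = 1 + j * a / i := by
  unfold attachPos
  rcases Nat.eq_zero_or_pos j with h | h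
  · simp [h]
  · rw [if_neg (by omega), if_neg (by omega)]

lemma attachPos_zero (a i : ℕ) : attachPos a i 0 = 1 := if_pos rfl

lemma attachPos_self (a i : ℕ) (hi : 0 < i) : attachPos a i i = a := by
  unfold attachPos
  rw [if_neg (by omega), if_pos rfl]

lemma div_lt_self' (j i a : ℕ) (ha : 1 ≤ a) (hj : j < i) : j * a / i < a := by
  have hi : 0 < i := by omega
  rw [Nat.div_lt_iff_lt_mul hi]
  calc j * a < i * a := by
        have := Nat.mul_lt_mul_of_lt_of_le hj (le_refl a) (by omega : 0 < a)
        exact this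
  _ = a * i := Nat.mul_comm _ _

lemma attachPos_pos (a i j : ℕ) (ha : 1 ≤ a) : 1 ≤ attachPos a i j := by
  unfold attachPos
  split
  · omega
  · split
    · omega
    · exact Nat.le_add_right 1 _

lemma attachPos_le (a i j : ℕ) (ha : 1 ≤ a) (hij : j ≤ i) : attachPos a i j ≤ a := by
  rcases eq_or_lt_of_le hij with h | h
  · subst h; unfold attachPos
    split
    · omega
    · rw [if_pos rfl]
  · rw [attachPos_of_lt a i j h]
    have := div_lt_self' j i a ha h
    omega

lemma Icc_subset_card {lo hi : ℕ} {s : Finset ℕ} (h : Finset.Icc lo hi ⊆ s) :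
    hi + 1 - lo ≤ s.card := by
  have := Finset.card_le_card h
  rwa [Nat.card_Icc] at this

lemma block_bound (a e x y : ℕ) (ha : 2 ≤ a) (he1 : a - 1 ≤ e) (he2 : e ≤ 2*a-2)
    (hxy : x ≤ y) (hya : y < a) :
    e * (y + 1 - x) ≤ a * (pcount a (Finset.Icc x y) + lcount a e (Finset.Icc x y)) := by
  have hp : pcount a (Finset.Icc x y) + (x-1) = min y (a-2) + 1 := by
    unfold pcount
    have hset : (Finset.range (a-1)).filter (fun u => u ∈ Finset.Icc x y ∨ u+1 ∈ Finset.Icc x y)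
        = Finset.Icc (x-1) (min y (a-2)) := by
      ext u
      simp only [Finset.mem_filter, Finset.mem_range, Finset.mem_Icc]
      omega
    rw [hset, Nat.card_Icc]
    omega
  set P := pcount a (Finset.Icc x y) with hPdef
  set Dl := lcount a e (Finset.Icc x y) with hDldef
  by_cases hcase : e + 1 ≤ a
  · -- e = a - 1 : no base leaves needed
    by_cases hxx : x = 0 ∧ y = a-1
    · calc e * (y+1-x) = (a-1) * a := by
            rw [hxx.1, hxx.2]; congr 1 <;> omega
      _ = a * (a-1) := Nat.mul_comm _ _
      _ ≤ a * (P + Dl) := Nat.mul_le_mul_left a (by omega)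
    · have hP : y + 1 - x ≤ P := by omega
      calc e * (y+1-x) ≤ a * P := Nat.mul_le_mul (by omega) hP
      _ ≤ a * (P + Dl) := Nat.mul_le_mul_left a (by omega)
  · -- e ≥ a
    set i := e - a with hidef
    have hie : e = a + i := by omega
    have hia : i ≤ a - 2 := by omega
    have hne : e + 1 - a = i + 1 := by omega
    by_cases hi0 : i = 0
    · -- e = a : one leaf at position 1
      have hDl : x = 0 → 1 ≤ Dl := by
        intro hx0
        have hsub : {0} ⊆ (Finset.range (e+1-a)).filter
            (fun j => attachPos a (e-a) j - 1 ∈ Finset.Icc x y) := by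
          intro j hj
          simp only [Finset.mem_singleton] at hj
          subst hj
          simp only [Finset.mem_filter, Finset.mem_range, hne, ← hidef]
          rw [attachPos_zero, Finset.mem_Icc]
          omega
        have := Finset.card_le_card hsub
        simpa [hDldef, lcount] using this
      have key : y + 1 - x ≤ P + Dl := by
        by_cases hx0 : x = 0
        · have := hDl hx0; omega
        · omega
      calc e * (y+1-x) = a * (y+1-x) := by rw [hie, hi0]; ring
      _ ≤ a * (P + Dl) := Nat.mul_le_mul_left a key
    · -- i ≥ 1
      have hipos : 1 ≤ i := by omega
      set Lo := (i*x + a - 1)/a with hLodef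
      set Hi := (i*(y+1) - 1)/a with hHidef
      have hLo1 : i*x ≤ a*Lo ∧ a*Lo + 1 ≤ i*x + a := by
        have h := Nat.div_add_mod (i*x + a - 1) a
        have h2 : (i*x + a - 1) % a < a := Nat.mod_lt _ (by omega)
        rw [← hLodef] at h
        omega
      have hy1 : 1 ≤ i*(y+1) := by
        have := Nat.mul_le_mul hipos (show 1 ≤ y+1 by omega)
        omega
      have hHi1 : a*Hi + 1 ≤ i*(y+1) ∧ i*(y+1) ≤ a*Hi + a := by
        have h := Nat.div_add_mod (i*(y+1) - 1) a
        have h2 : (i*(y+1) - 1) % a < a := Nat.mod_lt _ (by omega)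
        rw [← hHidef] at h
        omega
      have hlow : ∀ j, Lo ≤ j → j < i → x ≤ j*a/i := by
        intro j h1 h2
        rw [Nat.le_div_iff_mul_le (by omega : 0 < i)]
        calc x*i = i*x := Nat.mul_comm _ _
        _ ≤ a*Lo := hLo1.1
        _ ≤ a*j := Nat.mul_le_mul_left a h1
        _ = j*a := Nat.mul_comm _ _
      have hhigh : ∀ j, j ≤ Hi → j*a/i ≤ y := by
        intro j h1
        have h3 : j*a/i < y+1 := by
          rw [Nat.div_lt_iff_lt_mul (by omega : 0 < i)]
          calc j*a = a*j := Nat.mul_comm _ _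
          _ ≤ a*Hi := Nat.mul_le_mul_left a h1
          _ < i*(y+1) := by omega
          _ = (y+1)*i := Nat.mul_comm _ _
        omega
      by_cases hy : y = a - 1
      · -- block reaches the top vertex
        by_cases hLoi : Lo ≤ i
        · have hsub : Finset.Icc Lo i ⊆ (Finset.range (e+1-a)).filter
              (fun j => attachPos a (e-a) j - 1 ∈ Finset.Icc x y) := by
            intro j hj
            rw [Finset.mem_Icc] at hj
            rw [Finset.mem_filter, Finset.mem_range, hne, ← hidef]
            refine ⟨by omega, ?_⟩
            rcases eq_or_lt_of_le hj.2 with hji | hji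
            · rw [hji, attachPos_self a i (by omega), Finset.mem_Icc]
              omega
            · rw [attachPos_of_lt a i j hji]
              have hub := div_lt_self' j i a (by omega) hji
              have hlb := hlow j hj.1 hji
              rw [Finset.mem_Icc]
              omega
          have hDl : i + 1 - Lo ≤ Dl := by
            have := Icc_subset_card hsub
            simpa [hDldef, lcount] using this
          have hDl2 : i + 1 ≤ Dl + Lo := by omega
          by_cases hx0 : x = 0
          · have hLo0 : Lo = 0 := by
              rw [hLodef, hx0]
              simp only [Nat.mul_zero, Nat.zero_add]
              exact Nat.div_eq_of_lt (by omega)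
            have : e ≤ P + Dl := by omega
            calc e * (y+1-x) = e * a := by rw [hx0, hy]; congr 1; omega
            _ = a * e := Nat.mul_comm _ _
            _ ≤ a * (P + Dl) := Nat.mul_le_mul_left a this
          · -- x ≥ 1, P = a - x = y+1-x
            have hPval : P = y + 1 - x := by omega
            have hPx : P + x = a := by omega
            have hiP : i*P + i*x = i*a := by
              calc i*P + i*x = i*(P+x) := (Nat.mul_add i P x).symm
              _ = i*a := by rw [hPx]
            have hc1 : a*i + a ≤ a*Dl + a*Lo := by
              calc a*i + a = a*(i+1) := by ring
              _ ≤ a*(Dl+Lo) := Nat.mul_le_mul_left a hDl2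
              _ = a*Dl + a*Lo := Nat.mul_add a Dl Lo
            have hcomm : a*i = i*a := Nat.mul_comm a i
            have hgoal : e * (y+1-x) = a*P + i*P := by
              rw [hie, ← hPval]; ring
            rw [hgoal, Nat.mul_add a P Dl]
            omega
        · -- Lo > i : impossible since x ≤ a-1
          exfalso
          have h1 : a*(i+1) ≤ a*Lo := Nat.mul_le_mul_left a (by omega)
          have h2 : i*x ≤ i*(a-1) := Nat.mul_le_mul_left i (by omega)
          have h3 : i*(a-1) + i = i*a := by
            rw [← Nat.mul_succ]; congr 1; omega
          have h4 : a*(i+1) = a*i + a := by ring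
          have hcomm : a*i = i*a := Nat.mul_comm a i
          omega
      · -- y ≤ a - 2
        have hy2 : y + 1 ≤ a - 1 := by omega
        have hm1 : i*(y+1) ≤ i*(a-1) := Nat.mul_le_mul_left i hy2
        have hm2 : i*(a-1) + i = i*a := by
          rw [← Nat.mul_succ]; congr 1; omega
        have hcomm : a*i = i*a := Nat.mul_comm a i
        have hHii : Hi < i := by
          have : a*Hi < a*i := by omega
          exact Nat.lt_of_mul_lt_mul_left this
        have hsub : Finset.Icc Lo Hi ⊆ (Finset.range (e+1-a)).filter
            (fun j => attachPos a (e-a) j - 1 ∈ Finset.Icc x y) := by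
          intro j hj
          rw [Finset.mem_Icc] at hj
          rw [Finset.mem_filter, Finset.mem_range, hne, ← hidef]
          have hji : j < i := by omega
          refine ⟨by omega, ?_⟩
          rw [attachPos_of_lt a i j hji, Finset.mem_Icc]
          have := hlow j hj.1 hji
          have := hhigh j hj.2
          omega
        have hDl : Hi + 1 - Lo ≤ Dl := by
          have := Icc_subset_card hsub
          simpa [hDldef, lcount] using this
        have hLH : Lo ≤ Hi + 1 := by
          by_contra hcon
          have h1 : a*(Hi+2) ≤ a*Lo := Nat.mul_le_mul_left a (by omega)
          have h4 : a*(Hi+2) = a*Hi + 2*a := by ring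
          have h5 : i*x ≤ i*(y+1) := Nat.mul_le_mul_left i (by omega)
          omega
        have hDl2 : Hi + 1 ≤ Dl + Lo := by omega
        have hc1 : a*Hi + a ≤ a*Dl + a*Lo := by
          calc a*Hi + a = a*(Hi+1) := by ring
          _ ≤ a*(Dl+Lo) := Nat.mul_le_mul_left a hDl2
          _ = a*Dl + a*Lo := Nat.mul_add a Dl Lo
        by_cases hx0 : x = 0
        · have hLo0 : Lo = 0 := by
            rw [hLodef, hx0]
            simp only [Nat.mul_zero, Nat.zero_add]
            exact Nat.div_eq_of_lt (by omega)
          have hPval : P = y + 1 := by omega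
          have hDl3 : Hi + 1 ≤ Dl := by omega
          have hc2 : a*Hi + a ≤ a*Dl := by
            calc a*Hi + a = a*(Hi+1) := by ring
            _ ≤ a*Dl := Nat.mul_le_mul_left a hDl3
          have hgoal : e * (y+1-x) = a*(y+1) + i*(y+1) := by
            rw [hie, hx0]
            have : y + 1 - 0 = y + 1 := by omega
            rw [this]; ring
          have haP : a*P = a*(y+1) := by rw [hPval]
          rw [hgoal, Nat.mul_add a P Dl]
          omega
        · have hPval : P + x = y + 2 := by omega
          set l := y + 1 - x with hldef
          have hxl : x + l = y + 1 := by omega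
          have hil : i*l + i*x = i*(y+1) := by
            calc i*l + i*x = i*(l+x) := (Nat.mul_add i l x).symm
            _ = i*(y+1) := by rw [Nat.add_comm x l] at hxl; rw [hxl]
          have hal : a*l + a*x = a*(y+1) := by
            calc a*l + a*x = a*(l+x) := (Nat.mul_add a l x).symm
            _ = a*(y+1) := by rw [Nat.add_comm x l] at hxl; rw [hxl]
          have haP : a*P + a*x = a*(y+2) := by
            calc a*P + a*x = a*(P+x) := (Nat.mul_add a P x).symm
            _ = a*(y+2) := by rw [hPval]
          have hay2 : a*(y+2) = a*(y+1) + a := by ring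
          have hgoal : e * (y+1-x) = a*l + i*l := by
            rw [hie, ← hldef]; ring
          rw [hgoal, Nat.mul_add a P Dl]
          omega

lemma main_bound (a e : ℕ) (ha : 1 ≤ a) (he1 : a - 1 ≤ e) (he2 : e ≤ 2*a-2) :
    ∀ S : Finset ℕ, (∀ n ∈ S, n < a) → e * S.card ≤ a * (pcount a S + lcount a e S) := by
  intro S
  induction S using Finset.strongInduction with
  | _ S ih =>
    intro hSa
    rcases Finset.eq_empty_or_nonempty S with rfl | hne
    · simp
    · rcases Nat.eq_zero_or_pos e with he0 | hepos
      · simp [he0]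
      have ha2 : 2 ≤ a := by omega
      set y := S.max' hne with hydef
      have hyS : y ∈ S := S.max'_mem hne
      have hya : y < a := hSa y hyS
      have hmax : ∀ n ∈ S, n ≤ y := fun n hn => S.le_max' n hn
      have hex : ∃ x, Finset.Icc x y ⊆ S := by
        refine ⟨y, ?_⟩
        intro n hn
        rw [Finset.mem_Icc] at hn
        have : n = y := by omega
        rwa [this]
      set x := Nat.find hex with hxdef
      have hxP : Finset.Icc x y ⊆ S := Nat.find_spec hex
      have hxy : x ≤ y := by
        apply Nat.find_le
        intro n hn
        rw [Finset.mem_Icc] at hn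
        have : n = y := by omega
        rwa [this]
      have hxmin : x = 0 ∨ (x - 1) ∉ S := by
        rcases Nat.eq_zero_or_pos x with h | h
        · exact Or.inl h
        · right
          intro hmem
          have hsub : Finset.Icc (x-1) y ⊆ S := by
            intro n hn
            rw [Finset.mem_Icc] at hn
            rcases Nat.eq_or_lt_of_le hn.1 with h1 | h1
            · rwa [← h1]
            · exact hxP (Finset.mem_Icc.mpr ⟨by omega, hn.2⟩)
          exact Nat.find_min hex (show x - 1 < x by omega) hsub
      set B := Finset.Icc x y with hBdef
      set S' := S \ B with hS'def
      have hS'sub : S' ⊆ S := Finset.sdiff_subset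
      have hynotin : y ∉ S' := by
        rw [hS'def, Finset.mem_sdiff]
        intro hcon
        exact hcon.2 (Finset.mem_Icc.mpr ⟨hxy, le_refl y⟩)
      have hS'ssub : S' ⊂ S := ⟨hS'sub, fun hcon => hynotin (hcon hyS)⟩
      have hS'bound : ∀ n ∈ S', n + 1 < x := by
        intro n hn
        rw [hS'def, Finset.mem_sdiff, hBdef, Finset.mem_Icc] at hn
        have h1 : n ≤ y := hmax n hn.1
        have h2 : n < x := by omega
        rcases Nat.eq_or_lt_of_le (show n + 1 ≤ x by omega) with h3 | h3
        · exfalso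
          rcases hxmin with h4 | h4
          · omega
          · exact h4 (by rw [show x - 1 = n by omega]; exact hn.1)
        · omega
      have hSdecomp : ∀ n, n ∈ S ↔ n ∈ S' ∨ n ∈ B := by
        intro n
        rw [hS'def, Finset.mem_sdiff]
        constructor
        · intro h
          by_cases hB : n ∈ B
          · exact Or.inr hB
          · exact Or.inl ⟨h, hB⟩
        · rintro (⟨h, _⟩ | h)
          · exact h
          · exact hxP h
      have hpc : pcount a S = pcount a S' + pcount a B := by
        unfold pcount
        have heq : (Finset.range (a-1)).filter (fun u => u ∈ S ∨ u+1 ∈ S)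
            = ((Finset.range (a-1)).filter (fun u => u ∈ S' ∨ u+1 ∈ S'))
              ∪ ((Finset.range (a-1)).filter (fun u => u ∈ B ∨ u+1 ∈ B)) := by
          rw [← Finset.filter_or]
          apply Finset.filter_congr
          intro u _
          rw [hSdecomp u, hSdecomp (u+1)]
          tauto
        rw [heq, Finset.card_union_of_disjoint]
        rw [Finset.disjoint_left]
        intro u h1 h2
        rw [Finset.mem_filter] at h1 h2
        have hb : x ≤ u + 1 ∧ u ≤ y := by
          rcases h2.2 with h | h <;> rw [hBdef, Finset.mem_Icc] at h <;> omega
        rcases h1.2 with h | h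
        · have := hS'bound u h; omega
        · have := hS'bound (u+1) h; omega
      have hlc : lcount a e S = lcount a e S' + lcount a e B := by
        unfold lcount
        have heq : (Finset.range (e+1-a)).filter (fun j => attachPos a (e-a) j - 1 ∈ S)
            = ((Finset.range (e+1-a)).filter (fun j => attachPos a (e-a) j - 1 ∈ S'))
              ∪ ((Finset.range (e+1-a)).filter (fun j => attachPos a (e-a) j - 1 ∈ B)) := by
          rw [← Finset.filter_or]
          apply Finset.filter_congr
          intro j _
          rw [hSdecomp]
        rw [heq, Finset.card_union_of_disjoint]
        rw [Finset.disjoint_left]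
        intro j h1 h2
        rw [Finset.mem_filter] at h1 h2
        rw [hS'def, Finset.mem_sdiff] at h1
        exact h1.2.2 h2.2
      have hcard : S.card = S'.card + B.card := by
        have := Finset.card_sdiff_add_card_eq_card (show B ⊆ S from hxP)
        rw [← hS'def] at this
        omega
      have hIH := ih S' hS'ssub (fun n hn => hSa n (hS'sub hn))
      have hB := block_bound a e x y ha2 he1 he2 hxy hya
      have hBcard : B.card = y + 1 - x := Nat.card_Icc x y
      calc e * S.card = e * S'.card + e * (y+1-x) := by
            rw [hcard, hBcard]; ring
      _ ≤ a * (pcount a S' + lcount a e S') + a * (pcount a B + lcount a e B) :=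
            Nat.add_le_add hIH hB
      _ = a * (pcount a S + lcount a e S) := by rw [hpc, hlc]; ring


/-! ### Adjacency characterizations -/

lemma adj1 (a b : ℕ) (u v : Fin a) :
    (TabFull a b).Adj (Sum.inl u) (Sum.inl v) ↔ ((u:ℕ)+1 = (v:ℕ) ∨ (v:ℕ)+1 = (u:ℕ)) := by
  unfold TabFull
  erw [SimpleGraph.fromRel_adj]
  constructor
  · rintro ⟨hne, h | h⟩
    · exact Or.inl h
    · exact Or.inr h
  · intro h
    refine ⟨?_, ?_⟩
    · intro hcon
      have : u = v := by exact Sum.inl.inj hcon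
      subst this
      omega
    · rcases h with h | h
      · exact Or.inl h
      · exact Or.inr h

lemma adj2 (a b : ℕ) (u : Fin a) (j : Fin (baseEdges a b + 1 - a)) :
    (TabFull a b).Adj (Sum.inl u) (Sum.inr (Sum.inl j)) ↔
      (u:ℕ) + 1 = attachPos a (baseEdges a b - a) (j : ℕ) := by
  unfold TabFull
  erw [SimpleGraph.fromRel_adj]
  constructor
  · rintro ⟨hne, h | h⟩
    · exact h
    · exact absurd h not_false
  · intro h
    exact ⟨Sum.inl_ne_inr, Or.inl h⟩

lemma adj3 (a b : ℕ) (u : Fin a) (q : Fin (layers a b) × Fin a) :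
    (TabFull a b).Adj (Sum.inl u) (Sum.inr (Sum.inr q)) ↔ u = q.2 := by
  unfold TabFull
  erw [SimpleGraph.fromRel_adj]
  constructor
  · rintro ⟨hne, h | h⟩
    · exact h
    · exact absurd h not_false
  · intro h
    exact ⟨Sum.inl_ne_inr, Or.inl h⟩

lemma adj4 (a b : ℕ) (w w' : Fin (baseEdges a b + 1 - a) ⊕ (Fin (layers a b) × Fin a)) :
    ¬ (TabFull a b).Adj (Sum.inr w) (Sum.inr w') := by
  unfold TabFull
  erw [SimpleGraph.fromRel_adj]
  rintro ⟨hne, h | h⟩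
  · rcases w with j | q <;> exact h
  · rcases w' with j | q <;> exact h

/-- `T_{a,b}` is balanced: every subset `S` of its `a` unrooted (base-path) vertices is
incident to at least `(b/a)·|S|` edges. -/
theorem stmt_7 (a b : ℕ) (ha : 1 ≤ a) (hab : a ≤ b)
    (S : Set (TabV a b)) (hS : S ⊆ Set.range Sum.inl) :
    (eCount (TabFull a b) S : ℝ) ≥ ((b : ℝ) / (a : ℝ)) * S.ncard := by
  classical
  obtain ⟨hE1, hE2, hbE⟩ : a - 1 ≤ baseEdges a b ∧ baseEdges a b ≤ 2*a - 2 ∧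
      b = layers a b * a + baseEdges a b := by
    have h1 := Nat.div_add_mod (b + 1 - a) a
    have h2 : (b + 1 - a) % a < a := Nat.mod_lt _ (by omega)
    unfold baseEdges layers
    rw [Nat.mul_comm] at h1
    generalize hq : (b+1-a)/a * a = t at *
    omega
  have junk : TabV a b := Sum.inl ⟨0, ha⟩
  set S₀ : Finset ℕ :=
    (Finset.range a).filter (fun n => ∃ h : n < a, Sum.inl (⟨n, h⟩ : Fin a) ∈ S) with hS0def
  have hS₀a : ∀ n ∈ S₀, n < a := by
    intro n hn
    rw [hS0def, Finset.mem_filter, Finset.mem_range] at hn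
    exact hn.1
  have hmemS₀ : ∀ v : Fin a, Sum.inl v ∈ S ↔ (v : ℕ) ∈ S₀ := by
    intro v
    rw [hS0def, Finset.mem_filter, Finset.mem_range]
    constructor
    · intro h
      exact ⟨v.isLt, v.isLt, by rwa [Fin.eta]⟩
    · rintro ⟨_, h, hmem⟩
      rwa [Fin.eta] at hmem
  -- |S| = |S₀|
  have hcardS : S.ncard = S₀.card := by
    have himg : S = ((S₀.image (fun n =>
        if h : n < a then (Sum.inl ⟨n, h⟩ : TabV a b) else junk) : Finset (TabV a b)) :
        Set (TabV a b)) := by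
      ext v
      simp only [Finset.coe_image, Set.mem_image, Finset.mem_coe]
      constructor
      · intro hv
        obtain ⟨u, rfl⟩ := hS hv
        refine ⟨u.val, (hmemS₀ u).1 hv, ?_⟩
        beta_reduce
        erw [dif_pos u.isLt, Fin.eta]
      · rintro ⟨n, hn, rfl⟩
        have hna := hS₀a n hn
        erw [dif_pos hna]
        exact (hmemS₀ ⟨n, hna⟩).2 hn
    rw [himg, Set.ncard_coe_finset, Finset.card_image_of_injOn]
    intro m hm n hn hmn
    beta_reduce at hmn
    erw [dif_pos (hS₀a m hm), dif_pos (hS₀a n hn)] at hmn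
    have := Sum.inl.inj hmn
    exact Fin.mk.inj_iff.mp this
  -- edge descriptor finsets
  set pathF : Finset ℕ := (Finset.range (a-1)).filter (fun u => u ∈ S₀ ∨ u+1 ∈ S₀) with hpathF
  set leafF : Finset ℕ := (Finset.range (baseEdges a b + 1 - a)).filter
    (fun j => attachPos a (baseEdges a b - a) j - 1 ∈ S₀) with hleafF
  set layerF : Finset (Fin (layers a b) × Fin a) :=
    Finset.univ.filter (fun q => (q.2 : ℕ) ∈ S₀) with hlayerF
  set f1 : ℕ → Sym2 (TabV a b) := fun u =>
    if h : u + 1 < a then s(Sum.inl ⟨u, Nat.lt_of_succ_lt h⟩, Sum.inl ⟨u+1, h⟩)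
    else s(junk, junk) with hf1
  set f2 : ℕ → Sym2 (TabV a b) := fun j =>
    if h : j < baseEdges a b + 1 - a ∧ attachPos a (baseEdges a b - a) j - 1 < a then
      s(Sum.inl ⟨attachPos a (baseEdges a b - a) j - 1, h.2⟩, Sum.inr (Sum.inl ⟨j, h.1⟩))
    else s(junk, junk) with hf2
  set f3 : Fin (layers a b) × Fin a → Sym2 (TabV a b) := fun q =>
    s(Sum.inl q.2, Sum.inr (Sum.inr q)) with hf3
  set F : Finset (Sym2 (TabV a b)) := (pathF.image f1 ∪ leafF.image f2) ∪ layerF.image f3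
    with hF
  -- the incident edge set is exactly F
  have hset : {e ∈ (TabFull a b).edgeSet | ∃ v ∈ S, v ∈ e} = ↑F := by
    apply Set.eq_of_subset_of_subset
    · -- ⊆
      intro ee hee
      obtain ⟨hadj, v, hvS, hve⟩ := hee
      obtain ⟨w, rfl⟩ := hS hvS
      have hwS₀ : (w : ℕ) ∈ S₀ := (hmemS₀ w).1 hvS
      induction ee using Sym2.ind with
      | _ xx yy =>
        rw [SimpleGraph.mem_edgeSet] at hadj
        erw [Sym2.mem_iff] at hve
        simp only [hF, Finset.coe_union, Set.mem_union, Finset.coe_image, Set.mem_image,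
          Finset.mem_coe]
        rcases xx with u | w1
        · rcases yy with u' | w1'
          · -- path edge
            rw [adj1] at hadj
            left; left
            have hw : w = u ∨ w = u' := by
              rcases hve with h | h
              · exact Or.inl (Sum.inl.inj h)
              · exact Or.inr (Sum.inl.inj h)
            rcases hadj with h | h
            · refine ⟨(u : ℕ), ?_, ?_⟩
              · rw [hpathF, Finset.mem_filter, Finset.mem_range]
                refine ⟨by have := u'.isLt; omega, ?_⟩
                rcases hw with rfl | rfl
                · exact Or.inl hwS₀
                · right; rwa [h]
              · simp only [hf1]
                have hu1 : (u:ℕ) + 1 < a := by have := u'.isLt; omega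
                erw [dif_pos hu1, Sym2.eq_iff]
                left
                exact ⟨congrArg Sum.inl (Fin.ext rfl), congrArg Sum.inl (Fin.ext h)⟩
            · refine ⟨(u' : ℕ), ?_, ?_⟩
              · rw [hpathF, Finset.mem_filter, Finset.mem_range]
                refine ⟨by have := u.isLt; omega, ?_⟩
                rcases hw with rfl | rfl
                · right; rwa [h]
                · exact Or.inl hwS₀
              · simp only [hf1]
                have hu1 : (u':ℕ) + 1 < a := by have := u.isLt; omega
                erw [dif_pos hu1, Sym2.eq_iff]
                right
                exact ⟨congrArg Sum.inl (Fin.ext rfl), congrArg Sum.inl (Fin.ext h)⟩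
          · rcases w1' with j | q
            · -- base leaf edge, oriented (inl, inr inl)
              rw [adj2] at hadj
              left; right
              have hw : w = u := by
                rcases hve with h | h
                · exact Sum.inl.inj h
                · exact absurd h (by simp)
              subst hw
              refine ⟨(j : ℕ), ?_, ?_⟩
              · rw [hleafF, Finset.mem_filter, Finset.mem_range]
                exact ⟨j.isLt, by rw [← hadj]; simpa using hwS₀⟩
              · simp only [hf2]
                have hwlt := w.isLt
                have hcond : (j:ℕ) < baseEdges a b + 1 - a ∧
                    attachPos a (baseEdges a b - a) (j:ℕ) - 1 < a := ⟨j.isLt, by omega⟩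
                erw [dif_pos hcond, Sym2.eq_iff]
                left
                refine ⟨congrArg Sum.inl (Fin.ext ?_),
                  congrArg (fun t => Sum.inr (Sum.inl t)) (Fin.ext rfl)⟩
                show attachPos a (baseEdges a b - a) (j:ℕ) - 1 = (w:ℕ)
                omega
            · -- layer edge
              rw [adj3] at hadj
              right
              have hw : w = u := by
                rcases hve with h | h
                · exact Sum.inl.inj h
                · exact absurd h (by simp)
              subst hw
              refine ⟨q, ?_, ?_⟩
              · rw [hlayerF, Finset.mem_filter]
                refine ⟨Finset.mem_univ q, by rw [← hadj]; exact hwS₀⟩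
              · simp only [hf3]; rw [hadj]
        · rcases yy with u' | w2
          · -- symmetric orientations
            have hadj' := hadj.symm
            rcases w1 with j | q
            · rw [adj2] at hadj'
              left; right
              have hw : w = u' := by
                rcases hve with h | h
                · exact absurd h (by simp)
                · exact Sum.inl.inj h
              subst hw
              refine ⟨(j : ℕ), ?_, ?_⟩
              · rw [hleafF, Finset.mem_filter, Finset.mem_range]
                exact ⟨j.isLt, by rw [← hadj']; simpa using hwS₀⟩
              · simp only [hf2]
                have hwlt := w.isLt
                have hcond : (j:ℕ) < baseEdges a b + 1 - a ∧
                    attachPos a (baseEdges a b - a) (j:ℕ) - 1 < a := ⟨j.isLt, by omega⟩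
                erw [dif_pos hcond, Sym2.eq_iff]
                right
                refine ⟨congrArg Sum.inl (Fin.ext ?_),
                  congrArg (fun t => Sum.inr (Sum.inl t)) (Fin.ext rfl)⟩
                show attachPos a (baseEdges a b - a) (j:ℕ) - 1 = (w:ℕ)
                omega
            · rw [adj3] at hadj'
              right
              have hw : w = u' := by
                rcases hve with h | h
                · exact absurd h (by simp)
                · exact Sum.inl.inj h
              subst hw
              refine ⟨q, ?_, ?_⟩
              · rw [hlayerF, Finset.mem_filter]
                refine ⟨Finset.mem_univ q, by rw [← hadj']; exact hwS₀⟩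
              · simp only [hf3]; erw [hadj', Sym2.eq_swap]
          · exact absurd hadj (adj4 a b w1 w2)
    · -- ⊇
      intro ee hee
      rw [Finset.mem_coe, hF, Finset.mem_union, Finset.mem_union] at hee
      rcases hee with (hee | hee) | hee
      · rw [Finset.mem_image] at hee
        obtain ⟨u, hu, rfl⟩ := hee
        rw [hpathF, Finset.mem_filter, Finset.mem_range] at hu
        have hu1 : u + 1 < a := by omega
        refine ⟨?_, ?_⟩
        · simp only [hf1]; erw [dif_pos hu1, SimpleGraph.mem_edgeSet, adj1]
          exact Or.inl rfl
        · rcases hu.2 with h | h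
          · refine ⟨Sum.inl ⟨u, by omega⟩, (hmemS₀ _).2 h, ?_⟩
            simp only [hf1]; erw [dif_pos hu1, Sym2.mem_iff]
            exact Or.inl rfl
          · refine ⟨Sum.inl ⟨u+1, hu1⟩, (hmemS₀ _).2 h, ?_⟩
            simp only [hf1]; erw [dif_pos hu1, Sym2.mem_iff]
            exact Or.inr rfl
      · rw [Finset.mem_image] at hee
        obtain ⟨j, hj, rfl⟩ := hee
        rw [hleafF, Finset.mem_filter, Finset.mem_range] at hj
        have hple := attachPos_le a (baseEdges a b - a) j ha (by omega)
        have hppos := attachPos_pos a (baseEdges a b - a) j ha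
        have hcond : j < baseEdges a b + 1 - a ∧
            attachPos a (baseEdges a b - a) j - 1 < a := ⟨hj.1, by omega⟩
        refine ⟨?_, ?_⟩
        · simp only [hf2]; erw [dif_pos hcond, SimpleGraph.mem_edgeSet, adj2]
          simp only []
          omega
        · refine ⟨Sum.inl ⟨attachPos a (baseEdges a b - a) j - 1, hcond.2⟩,
            (hmemS₀ _).2 hj.2, ?_⟩
          simp only [hf2]; erw [dif_pos hcond, Sym2.mem_iff]
          exact Or.inl rfl
      · rw [Finset.mem_image] at hee
        obtain ⟨q, hq, rfl⟩ := hee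
        rw [hlayerF, Finset.mem_filter] at hq
        refine ⟨?_, ?_⟩
        · simp only [hf3]; erw [SimpleGraph.mem_edgeSet, adj3]
        · refine ⟨Sum.inl q.2, (hmemS₀ _).2 hq.2, ?_⟩
          simp only [hf3]; erw [Sym2.mem_iff]
          exact Or.inl rfl
  -- compute the cardinality of F
  have hpcond : ∀ j ∈ leafF, (j < baseEdges a b + 1 - a ∧
      attachPos a (baseEdges a b - a) j - 1 < a) := by
    intro j hj
    rw [hleafF, Finset.mem_filter, Finset.mem_range] at hj
    have := attachPos_le a (baseEdges a b - a) j ha (by omega)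
    have := attachPos_pos a (baseEdges a b - a) j ha
    exact ⟨hj.1, by omega⟩
  have hcard1 : (pathF.image f1).card = pathF.card := by
    apply Finset.card_image_of_injOn
    intro u hu u' hu' h
    rw [Finset.mem_coe, hpathF, Finset.mem_filter, Finset.mem_range] at hu hu'
    simp only [hf1] at h
    erw [dif_pos (show u + 1 < a by omega), dif_pos (show u' + 1 < a by omega),
      Sym2.eq_iff] at h
    rcases h with ⟨h1, h2⟩ | ⟨h1, h2⟩
    · have := Sum.inl.inj h1
      exact Fin.mk.inj_iff.mp this
    · have e1 := Fin.mk.inj_iff.mp (Sum.inl.inj h1)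
      have e2 := Fin.mk.inj_iff.mp (Sum.inl.inj h2)
      omega
  have hcard2 : (leafF.image f2).card = leafF.card := by
    apply Finset.card_image_of_injOn
    intro u hu u' hu' h
    simp only [hf2] at h
    erw [dif_pos (hpcond u (Finset.mem_coe.mp hu)), dif_pos (hpcond u' (Finset.mem_coe.mp hu')), Sym2.eq_iff] at h
    rcases h with ⟨h1, h2⟩ | ⟨h1, h2⟩
    · exact Fin.mk.inj_iff.mp (Sum.inl.inj (Sum.inr.inj h2))
    · exact nomatch h1
  have hcard3 : (layerF.image f3).card = layerF.card := by
    apply Finset.card_image_of_injOn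
    intro q hq q' hq' h
    simp only [hf3] at h
    erw [Sym2.eq_iff] at h
    rcases h with ⟨h1, h2⟩ | ⟨h1, h2⟩
    · exact Sum.inr.inj (Sum.inr.inj h2)
    · exact nomatch h1
  have hd12 : Disjoint (pathF.image f1) (leafF.image f2) := by
    rw [Finset.disjoint_left]
    intro ee h1 h2
    rw [Finset.mem_image] at h1 h2
    obtain ⟨u, hu, rfl⟩ := h1
    obtain ⟨j, hj, hj2⟩ := h2
    rw [hpathF, Finset.mem_filter, Finset.mem_range] at hu
    simp only [hf1, hf2] at hj2
    erw [dif_pos (hpcond j hj), dif_pos (show u + 1 < a by omega), Sym2.eq_iff] at hj2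
    rcases hj2 with ⟨h1, h2⟩ | ⟨h1, h2⟩ <;> exact nomatch h2
  have hd3 : Disjoint (pathF.image f1 ∪ leafF.image f2) (layerF.image f3) := by
    rw [Finset.disjoint_left]
    intro ee h1 h2
    rw [Finset.mem_image] at h2
    obtain ⟨q, hq, rfl⟩ := h2
    rw [Finset.mem_union, Finset.mem_image, Finset.mem_image] at h1
    rcases h1 with ⟨u, hu, hu2⟩ | ⟨j, hj, hj2⟩
    · rw [hpathF, Finset.mem_filter, Finset.mem_range] at hu
      simp only [hf1, hf3] at hu2
      erw [dif_pos (show u + 1 < a by omega), Sym2.eq_iff] at hu2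
      rcases hu2 with ⟨h1, h2⟩ | ⟨h1, h2⟩
      · exact nomatch h2
      · exact nomatch h1
    · simp only [hf2, hf3] at hj2
      erw [dif_pos (hpcond j hj), Sym2.eq_iff] at hj2
      rcases hj2 with ⟨h1, h2⟩ | ⟨h1, h2⟩
      · exact nomatch h2
      · exact nomatch h1
  have hFcard : F.card = pathF.card + leafF.card + layerF.card := by
    rw [hF, Finset.card_union_of_disjoint hd3, Finset.card_union_of_disjoint hd12,
      hcard1, hcard2, hcard3]
  -- layerF has layers·|S₀| elements
  have hlayercard : layerF.card = layers a b * S₀.card := by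
    have hprod : layerF = Finset.univ ×ˢ (Finset.univ.filter (fun v : Fin a => (v:ℕ) ∈ S₀)) := by
      ext q
      simp only [hlayerF, Finset.mem_filter, Finset.mem_product, Finset.mem_univ, true_and]
    rw [hprod, Finset.card_product, Finset.card_univ, Fintype.card_fin]
    congr 1
    apply Finset.card_bij (fun (v : Fin a) _ => (v : ℕ))
    · intro v hv
      rw [Finset.mem_filter] at hv
      exact hv.2
    · intro v hv v' hv' h
      exact Fin.ext h
    · intro n hn
      exact ⟨⟨n, hS₀a n hn⟩, Finset.mem_filter.mpr ⟨Finset.mem_univ _, hn⟩, rfl⟩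
  -- final arithmetic
  have hEc : eCount (TabFull a b) S
      = pcount a S₀ + lcount a (baseEdges a b) S₀ + layers a b * S₀.card := by
    unfold eCount
    rw [hset, Set.ncard_coe_finset, hFcard, hlayercard]
    rfl
  have hmain := main_bound a (baseEdges a b) ha hE1 hE2 S₀ hS₀a
  have hkey : b * S₀.card ≤ a * eCount (TabFull a b) S := by
    rw [hEc]
    calc b * S₀.card = a * (layers a b * S₀.card) + baseEdges a b * S₀.card := by
          nth_rewrite 1 [hbE]; ring
    _ ≤ a * (layers a b * S₀.card) + a * (pcount a S₀ + lcount a (baseEdges a b) S₀) :=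
          Nat.add_le_add_left hmain _
    _ = a * (pcount a S₀ + lcount a (baseEdges a b) S₀ + layers a b * S₀.card) := by ring
  rw [hcardS, ge_iff_le, div_mul_eq_mul_div, div_le_iff₀ (by positivity : (0:ℝ) < (a:ℝ))]
  calc (b:ℝ) * (S₀.card : ℝ) = ((b * S₀.card : ℕ) : ℝ) := by push_cast; ring
  _ ≤ ((a * eCount (TabFull a b) S : ℕ) : ℝ) := Nat.cast_le.mpr hkey
  _ = (eCount (TabFull a b) S : ℝ) * (a : ℝ) := by push_cast; ring
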